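/- Let q be a prime power, n, m natural numbers, and f ∈ F_q[x_1,…,x_n] a nonzero polynomial of total degree at most d with d < m·q^2. If f vanishes with multiplicity at least m at every point of the product set V = {u't_1 + v't_2 : u',v' ∈ F_q}^n ⊆ F_q(t_1,t_2)^n (viewing f as a polynomial over the rational function field F_q(t_1,t_2)), then f = 0. Equivalently, the evaluation matrix of all Hasse derivatives of weight less than m of all monomials of degree at most d at points of V has full column rank over F_q. -/

import Mathlib

open MvPolynomial

/-- The multivariate Hasse derivative. -/
noncomputable def hasseDeriv {n : ℕ} {R : Type*} [CommRing R] (i : Fin n →₀ ℕ)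
    (f : MvPolynomial (Fin n) R) : MvPolynomial (Fin n) R :=
  (AddMonoidAlgebra.coeff f).sum fun d c =>
    (∏ k ∈ d.support ∪ i.support, Nat.choose (d k) (i k)) •
      MvPolynomial.monomial (d - i) c

/-- `f` vanishes to order (multiplicity) at least `m` at the point `a`. -/
def vanishesTo {n : ℕ} {R : Type*} [CommRing R] (f : MvPolynomial (Fin n) R)
    (a : Fin n → R) (m : ℕ) : Prop :=
  ∀ j : Fin n →₀ ℕ, (j.sum fun _ e => e) < m → MvPolynomial.eval a (hasseDeriv j f) = 0

/-- The rational function field `F_q(t₁,t₂)`. -/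
abbrev RatFld (F : Type*) [Field F] : Type _ := FractionRing (MvPolynomial (Fin 2) F)

/-- The ring map `F → F(t₁,t₂)`. -/
noncomputable def constMap (F : Type*) [Field F] : F →+* RatFld F :=
  (algebraMap (MvPolynomial (Fin 2) F) (RatFld F)).comp MvPolynomial.C

/-- The point `u t₁ + v t₂ ∈ F(t₁,t₂)^n` determined by `u, v ∈ F^n`. -/
noncomputable def ptUV {F : Type*} [Field F] {n : ℕ} (u v : Fin n → F) :
    Fin n → RatFld F := fun i =>
  algebraMap (MvPolynomial (Fin 2) F) (RatFld F)
    (MvPolynomial.C (u i) * MvPolynomial.X 0 + MvPolynomial.C (v i) * MvPolynomial.X 1)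

namespace SZaux

variable {n : ℕ} {R : Type*} [CommRing R]

lemma hd_coeff (j : Fin n →₀ ℕ) (f : MvPolynomial (Fin n) R) (e : Fin n →₀ ℕ) :
    MvPolynomial.coeff e (hasseDeriv j f) =
      ((∏ k, ((e + j) k).choose (j k) : ℕ) : R) * MvPolynomial.coeff (e + j) f := by
  classical
  rw [hasseDeriv, Finsupp.sum, MvPolynomial.coeff_sum]
  rw [Finset.sum_eq_single (e + j)]
  · rw [MvPolynomial.coeff_smul, MvPolynomial.coeff_monomial]
    have h1 : e + j - j = e := by ext k; simp
    rw [if_pos h1]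
    have h2 : (∏ k ∈ (e + j).support ∪ j.support, ((e + j) k).choose (j k))
        = ∏ k, ((e + j) k).choose (j k) := by
      refine Finset.prod_subset (Finset.subset_univ _) (fun k _ hk => ?_)
      simp only [Finset.mem_union, Finsupp.mem_support_iff, not_or, not_not] at hk
      simp [hk.1, hk.2]
    rw [h2, nsmul_eq_mul]
    rfl
  · intro d _ hd
    by_cases h : d - j = e
    · have hk : ∃ k, d k < j k := by
        by_contra hno
        push_neg at hno
        apply hd
        ext k
        have : e k = d k - j k := by rw [← h]; rfl
        simp [this, Nat.sub_add_cancel (hno k)]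
      obtain ⟨k, hk⟩ := hk
      have hz : (∏ k ∈ d.support ∪ j.support, (d k).choose (j k)) = 0 := by
        refine Finset.prod_eq_zero (Finset.mem_union_right _ ?_) (Nat.choose_eq_zero_of_lt hk)
        simp only [Finsupp.mem_support_iff]
        omega
      rw [hz, zero_smul, MvPolynomial.coeff_zero]
    · rw [MvPolynomial.coeff_smul, MvPolynomial.coeff_monomial, if_neg h, smul_zero]
  · intro h
    rw [Finsupp.notMem_support_iff] at h
    rw [h, map_zero, smul_zero, MvPolynomial.coeff_zero]

lemma hd_zero_poly (i : Fin n →₀ ℕ) : hasseDeriv i (0 : MvPolynomial (Fin n) R) = 0 := by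
  ext e; rw [hd_coeff]; simp

lemma hd_C_mul (i : Fin n →₀ ℕ) (r : R) (g : MvPolynomial (Fin n) R) :
    hasseDeriv i (MvPolynomial.C r * g) = MvPolynomial.C r * hasseDeriv i g := by
  ext e
  rw [MvPolynomial.coeff_C_mul, hd_coeff, hd_coeff, MvPolynomial.coeff_C_mul]
  ring

lemma hd_natCast_mul (i : Fin n →₀ ℕ) (c : ℕ) (g : MvPolynomial (Fin n) R) :
    hasseDeriv i ((c : MvPolynomial (Fin n) R) * g) =
      (c : MvPolynomial (Fin n) R) * hasseDeriv i g := by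
  rw [← MvPolynomial.C_eq_coe_nat, hd_C_mul]

lemma weight_add (e i : Fin n →₀ ℕ) :
    ((e + i).sum fun _ x => x) = (e.sum fun _ x => x) + (i.sum fun _ x => x) :=
  Finsupp.sum_add_index' (fun _ => rfl) (fun _ _ _ => rfl)

lemma weight_pos {e : Fin n →₀ ℕ} (he : e ≠ 0) : 0 < e.sum fun _ x => x := by
  obtain ⟨k, hk⟩ : ∃ k, e k ≠ 0 := by
    by_contra h; push_neg at h; exact he (Finsupp.ext h)
  have hmem : k ∈ e.support := Finsupp.mem_support_iff.mpr hk
  have h2 : e k ≤ ∑ x ∈ e.support, e x :=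
    Finset.single_le_sum (fun _ _ => Nat.zero_le _) hmem
  rw [Finsupp.sum]
  omega

lemma hd_top_eq_C {f : MvPolynomial (Fin n) R} {i : Fin n →₀ ℕ}
    (hi : (i.sum fun _ x => x) = f.totalDegree) :
    hasseDeriv i f = MvPolynomial.C (MvPolynomial.coeff i f) := by
  ext e
  rw [hd_coeff, MvPolynomial.coeff_C]
  by_cases he : e = 0
  · subst he
    simp [Nat.choose_self]
  · rw [if_neg (fun h => he h.symm)]
    have hcz : MvPolynomial.coeff (e + i) f = 0 := by
      by_contra hc
      have hle := MvPolynomial.le_totalDegree (MvPolynomial.mem_support_iff.mpr hc)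
      rw [weight_add] at hle
      have := weight_pos he
      omega
    simp [hcz]

lemma exists_eval_hd_ne_zero {f : MvPolynomial (Fin n) R} (hf : f ≠ 0) (a : Fin n → R) :
    ∃ i : Fin n →₀ ℕ, (i.sum fun _ x => x) = f.totalDegree ∧
      MvPolynomial.eval a (hasseDeriv i f) ≠ 0 := by
  obtain ⟨i, hmem, hi⟩ := Finset.exists_mem_eq_sup f.support
    (Finset.nonempty_iff_ne_empty.mpr (MvPolynomial.support_eq_empty.not.mpr hf)) (fun s : Fin n →₀ ℕ => s.sum fun _ e => e)
  have hiw : (i.sum fun _ x => x) = f.totalDegree := by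
    rw [MvPolynomial.totalDegree, hi]
  refine ⟨i, hiw, ?_⟩
  rw [hd_top_eq_C hiw, MvPolynomial.eval_C]
  exact MvPolynomial.mem_support_iff.mp hmem

lemma cons_add_cons (s l : ℕ) (m i : Fin n →₀ ℕ) :
    Finsupp.cons s m + Finsupp.cons l i = Finsupp.cons (s + l) (m + i) := by
  ext k
  refine Fin.cases ?_ (fun kk => ?_) k <;>
    simp [Finsupp.add_apply, Finsupp.cons_zero, Finsupp.cons_succ]

lemma finSuccEquiv_hd (l : ℕ) (i : Fin n →₀ ℕ) (f : MvPolynomial (Fin (n+1)) R) (s : ℕ) :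
    (finSuccEquiv R n (hasseDeriv (Finsupp.cons l i) f)).coeff s =
      hasseDeriv i ((Polynomial.hasseDeriv l (finSuccEquiv R n f)).coeff s) := by
  ext m
  rw [finSuccEquiv_coeff_coeff, hd_coeff, hd_coeff, Polynomial.hasseDeriv_coeff,
    ← MvPolynomial.C_eq_coe_nat, MvPolynomial.coeff_C_mul, cons_add_cons,
    ← finSuccEquiv_coeff_coeff]
  rw [Fin.prod_univ_succ]
  simp only [Finsupp.cons_zero, Finsupp.cons_succ]
  push_cast
  ring

noncomputable def vAux (i : Fin n →₀ ℕ) (a : Fin n → R)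
    (P : Polynomial (MvPolynomial (Fin n) R)) : Polynomial R :=
  ∑ s ∈ P.support, Polynomial.C (MvPolynomial.eval a (hasseDeriv i (P.coeff s))) *
    Polynomial.X ^ s

lemma vAux_coeff (i : Fin n →₀ ℕ) (a : Fin n → R) (P : Polynomial (MvPolynomial (Fin n) R))
    (s : ℕ) : (vAux i a P).coeff s = MvPolynomial.eval a (hasseDeriv i (P.coeff s)) := by
  classical
  rw [vAux, Polynomial.finset_sum_coeff]
  simp only [Polynomial.coeff_C_mul, Polynomial.coeff_X_pow, mul_ite, mul_one, mul_zero]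
  rw [Finset.sum_ite_eq P.support s
    (fun s' => MvPolynomial.eval a (hasseDeriv i (P.coeff s')))]
  by_cases hs : s ∈ P.support
  · rw [if_pos hs]
  · rw [if_neg hs, Polynomial.notMem_support_iff.mp hs, hd_zero_poly, map_zero]

lemma eval_cons_hd (l : ℕ) (i : Fin n →₀ ℕ) (f : MvPolynomial (Fin (n+1)) R) (b : R)
    (a : Fin n → R) :
    MvPolynomial.eval (Fin.cons b a) (hasseDeriv (Finsupp.cons l i) f) =
      Polynomial.eval b (Polynomial.hasseDeriv l (vAux i a (finSuccEquiv R n f))) := by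
  rw [eval_eq_eval_mv_eval']
  congr 1
  ext s : 1
  rw [Polynomial.coeff_map, finSuccEquiv_hd, Polynomial.hasseDeriv_coeff,
    Polynomial.hasseDeriv_coeff, vAux_coeff, ← MvPolynomial.C_eq_coe_nat, hd_C_mul,
    map_mul, MvPolynomial.eval_C]

lemma eval_hd_rootMultiplicity {K : Type*} [Field K] {v : Polynomial K} (hv : v ≠ 0) (b : K) :
    Polynomial.eval b (Polynomial.hasseDeriv (v.rootMultiplicity b) v) ≠ 0 := by
  rw [← Polynomial.taylor_coeff]
  set r := v.rootMultiplicity b with hr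
  have h := Polynomial.pow_mul_divByMonic_rootMultiplicity_eq v b
  have hq := Polynomial.eval_divByMonic_pow_rootMultiplicity_ne_zero b hv
  set q := v /ₘ (Polynomial.X - Polynomial.C b) ^ r with hqdef
  have htay : Polynomial.taylor b v = Polynomial.X ^ r * Polynomial.taylor b q := by
    conv_lhs => rw [← h]
    rw [Polynomial.taylor_mul]
    congr 1
    rw [Polynomial.taylor_apply, Polynomial.pow_comp, Polynomial.sub_comp,
      Polynomial.X_comp, Polynomial.C_comp]
    simp
    rfl
  rw [htay]
  have hcx := Polynomial.coeff_X_pow_mul (Polynomial.taylor b q) r 0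
  rw [Nat.zero_add] at hcx
  rw [hcx, Polynomial.taylor_coeff_zero]
  exact hq

lemma sum_rootMultiplicity_le {K : Type*} [Field K] {v : Polynomial K} (hv : v ≠ 0)
    (S : Finset K) : ∑ b ∈ S, v.rootMultiplicity b ≤ v.natDegree := by
  classical
  have h0 : ∑ b ∈ S, v.rootMultiplicity b = ∑ b ∈ S, v.roots.count b := by
    simp [Polynomial.count_roots]
  rw [h0]
  have h1 : ∑ b ∈ S, v.roots.count b = ∑ b ∈ S ∩ v.roots.toFinset, v.roots.count b := by
    refine (Finset.sum_subset Finset.inter_subset_left ?_).symm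
    intro x hx hnx
    simp only [Finset.mem_inter, hx, true_and, Multiset.mem_toFinset] at hnx
    exact Multiset.count_eq_zero.mpr hnx
  rw [h1]
  refine le_trans (le_trans (Finset.sum_le_sum_of_subset Finset.inter_subset_right) ?_)
    (Polynomial.card_roots' v)
  rw [Multiset.toFinset_sum_count_eq]

lemma sum_piFinset_succ {K : Type*} [DecidableEq K] {n : ℕ} (S : Finset K)
    (g : (Fin (n+1) → K) → ℕ) :
    ∑ y ∈ Fintype.piFinset (fun _ : Fin (n+1) => S), g y =
      ∑ a ∈ Fintype.piFinset (fun _ : Fin n => S), ∑ b ∈ S, g (Fin.cons b a) := by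
  rw [← Finset.sum_product']
  refine Finset.sum_nbij' (fun y => (Fin.tail y, y 0)) (fun p => Fin.cons p.2 p.1) ?_ ?_ ?_ ?_ ?_
  · intro y hy
    rw [Fintype.mem_piFinset] at hy
    refine Finset.mem_product.mpr ⟨?_, by simpa using hy 0⟩
    rw [Fintype.mem_piFinset]
    intro k
    simpa [Fin.tail] using hy k.succ
  · intro p hp
    rw [Finset.mem_product] at hp
    rw [Fintype.mem_piFinset]
    intro k
    refine Fin.cases ?_ (fun kk => ?_) k
    · simpa using hp.2
    · simpa using Fintype.mem_piFinset.mp hp.1 kk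
  · intro y _
    exact Fin.cons_self_tail y
  · intro p _
    simp [Fin.tail_cons]
  · intro y _
    simp only []
    rw [Fin.cons_self_tail]

theorem sz_mult {K : Type*} [Field K] :
    ∀ (n : ℕ) (f : MvPolynomial (Fin n) K), f ≠ 0 → ∀ (S : Finset K)
      (μ : (Fin n → K) → ℕ),
      (∀ a ∈ Fintype.piFinset (fun _ : Fin n => S), vanishesTo f a (μ a)) →
      (∑ a ∈ Fintype.piFinset (fun _ : Fin n => S), μ a) * S.card ≤
        f.totalDegree * S.card ^ n := by
  intro n
  induction n with
  | zero =>
    intro f hf S μ hvan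
    have hz : ∀ a ∈ Fintype.piFinset (fun _ : Fin 0 => S), μ a = 0 := by
      intro a ha
      by_contra hμ
      obtain ⟨i, hiw, hine⟩ := exists_eval_hd_ne_zero hf a
      have hi0 : i = 0 := Subsingleton.elim i 0
      refine hine (hvan a ha i ?_)
      rw [hi0]
      simp only [Finsupp.sum_zero_index]
      omega
    rw [Finset.sum_eq_zero hz]
    simp
  | succ n ih =>
    intro f hf S μ hvan
    classical
    set P := finSuccEquiv K n f with hPdef
    have hP : P ≠ 0 := by
      intro h0
      exact hf ((map_eq_zero_iff _ (AlgEquiv.injective _)).mp h0)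
    set t := P.natDegree with htdef
    set ft := P.coeff t with hftdef
    have hft : ft ≠ 0 := Polynomial.leadingCoeff_ne_zero.mpr hP
    have hdegft : ft.totalDegree + t ≤ f.totalDegree :=
      totalDegree_coeff_finSuccEquiv_add_le f t hft
    set Wset : (Fin n → K) → Set ℕ := fun a =>
      {M | ∃ j : Fin n →₀ ℕ, (j.sum fun _ e => e) = M ∧
        MvPolynomial.eval a (hasseDeriv j ft) ≠ 0} with hWdef
    have hWne : ∀ a, (Wset a).Nonempty := by
      intro a
      obtain ⟨i, hi1, hi2⟩ := exists_eval_hd_ne_zero hft a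
      exact ⟨_, i, rfl, hi2⟩
    set w : (Fin n → K) → ℕ := fun a => sInf (Wset a) with hwdef
    have hwvan : ∀ a, vanishesTo ft a (w a) := by
      intro a j hj
      by_contra hne
      have hmemW : (j.sum fun _ e => e) ∈ Wset a := ⟨j, rfl, hne⟩
      have := Nat.sInf_le hmemW
      have hwa : w a = sInf (Wset a) := rfl
      omega
    have hwit : ∀ a, ∃ j : Fin n →₀ ℕ, (j.sum fun _ e => e) = w a ∧
        MvPolynomial.eval a (hasseDeriv j ft) ≠ 0 := fun a => Nat.sInf_mem (hWne a)
    have key : ∀ a ∈ Fintype.piFinset (fun _ : Fin n => S),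
        ∑ b ∈ S, μ (Fin.cons b a) ≤ S.card * w a + t := by
      intro a ha
      obtain ⟨i, hiw, hine⟩ := hwit a
      set v := vAux i a P with hvdef
      have hvc : ∀ s, v.coeff s = MvPolynomial.eval a (hasseDeriv i (P.coeff s)) :=
        fun s => vAux_coeff i a P s
      have hvt : v.coeff t ≠ 0 := by rw [hvc t]; exact hine
      have hvne : v ≠ 0 := fun h0 => hvt (by rw [h0, Polynomial.coeff_zero])
      have hvdeg : v.natDegree ≤ t := by
        rw [Polynomial.natDegree_le_iff_coeff_eq_zero]
        intro s hs
        rw [hvc s, Polynomial.coeff_eq_zero_of_natDegree_lt hs, hd_zero_poly, map_zero]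
      have hb : ∀ b ∈ S, μ (Fin.cons b a) ≤ w a + v.rootMultiplicity b := by
        intro b hbS
        by_contra hgt
        push_neg at hgt
        have hmem : Fin.cons b a ∈ Fintype.piFinset (fun _ : Fin (n+1) => S) := by
          rw [Fintype.mem_piFinset]
          intro k
          refine Fin.cases ?_ (fun kk => ?_) k
          · simpa using hbS
          · simpa using Fintype.mem_piFinset.mp ha kk
        have h0 := hvan _ hmem (Finsupp.cons (v.rootMultiplicity b) i)
          (by rw [Finsupp.sum_cons]; omega)
        rw [eval_cons_hd] at h0
        exact eval_hd_rootMultiplicity hvne b h0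
      calc ∑ b ∈ S, μ (Fin.cons b a) ≤ ∑ b ∈ S, (w a + v.rootMultiplicity b) :=
            Finset.sum_le_sum hb
        _ = S.card * w a + ∑ b ∈ S, v.rootMultiplicity b := by
            rw [Finset.sum_add_distrib, Finset.sum_const, smul_eq_mul]
        _ ≤ S.card * w a + t := by
            have := (sum_rootMultiplicity_le hvne S).trans hvdeg
            omega
    have ihft := ih ft hft S w (fun a _ => hwvan a)
    set c := S.card with hcdef
    set A := ∑ a ∈ Fintype.piFinset (fun _ : Fin n => S), w a with hAdef
    have hcardpf : (Fintype.piFinset (fun _ : Fin n => S)).card = c ^ n := by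
      rw [Fintype.card_piFinset_const]
    have htotal : ∑ y ∈ Fintype.piFinset (fun _ : Fin (n+1) => S), μ y ≤ c * A + t * c ^ n := by
      rw [sum_piFinset_succ]
      calc ∑ a ∈ Fintype.piFinset (fun _ : Fin n => S), ∑ b ∈ S, μ (Fin.cons b a)
          ≤ ∑ a ∈ Fintype.piFinset (fun _ : Fin n => S), (c * w a + t) :=
            Finset.sum_le_sum key
        _ = c * A + t * c ^ n := by
            rw [Finset.sum_add_distrib, ← Finset.mul_sum, Finset.sum_const, hcardpf,
              smul_eq_mul, mul_comm (c ^ n) t]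
    calc (∑ y ∈ Fintype.piFinset (fun _ : Fin (n+1) => S), μ y) * c
        ≤ (c * A + t * c ^ n) * c := Nat.mul_le_mul_right c htotal
      _ = (A * c) * c + t * c ^ (n+1) := by ring
      _ ≤ (ft.totalDegree * c ^ n) * c + t * c ^ (n+1) :=
          Nat.add_le_add_right (Nat.mul_le_mul_right c ihft) _
      _ = (ft.totalDegree + t) * c ^ (n+1) := by ring
      _ ≤ f.totalDegree * c ^ (n+1) := Nat.mul_le_mul_right _ hdegft

lemma totalDegree_map_le' {S : Type*} [CommRing S] (φ : R →+* S)
    (f : MvPolynomial (Fin n) R) :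
    (MvPolynomial.map φ f).totalDegree ≤ f.totalDegree := by
  rw [MvPolynomial.totalDegree]
  apply Finset.sup_le
  intro e he
  apply MvPolynomial.le_totalDegree
  rw [MvPolynomial.mem_support_iff] at he ⊢
  rw [MvPolynomial.coeff_map] at he
  intro h0
  exact he (by rw [h0, map_zero])

end SZaux

/-- if `f ∈ F_q[x_1,…,x_n]` has total degree at most `d < m q²` and, viewed over
`F_q(t₁,t₂)`, vanishes with multiplicity at least `m` at every point of the product set
`V = {u't₁ + v't₂ : u',v' ∈ F_q}^n`, then `f = 0`. -/
theorem vanish_on_V_eq_zero {F : Type*} [Field F] [Fintype F] {n m d : ℕ}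
    (f : MvPolynomial (Fin n) F) (hdeg : f.totalDegree ≤ d)
    (hd : d < m * Fintype.card F ^ 2)
    (hvan : ∀ u v : Fin n → F,
      vanishesTo (MvPolynomial.map (constMap F) f) (ptUV u v) m) :
    f = 0 := by
  classical
  by_contra hf0
  set K := RatFld F
  have hconstinj : Function.Injective (constMap F) := (constMap F).injective
  set g := MvPolynomial.map (constMap F) f with hg
  have hg0 : g ≠ 0 := by
    intro h0
    exact hf0 (MvPolynomial.map_injective _ hconstinj (by rw [← hg, h0, map_zero]))
  have hgdeg : g.totalDegree ≤ d := le_trans (SZaux.totalDegree_map_le' _ f) hdeg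
  set φ : F × F → K := fun p => algebraMap (MvPolynomial (Fin 2) F) K
    (MvPolynomial.C p.1 * MvPolynomial.X 0 + MvPolynomial.C p.2 * MvPolynomial.X 1) with hφ
  have hφinj : Function.Injective φ := by
    intro p p' hpp
    have halg : Function.Injective (algebraMap (MvPolynomial (Fin 2) F) K) :=
      IsFractionRing.injective _ _
    have h2 := halg hpp
    have hc1 := congrArg (MvPolynomial.coeff (Finsupp.single (0 : Fin 2) 1)) h2
    have hc2 := congrArg (MvPolynomial.coeff (Finsupp.single (1 : Fin 2) 1)) h2
    simp [MvPolynomial.coeff_X', Finsupp.single_eq_single_iff] at hc1 hc2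
    exact Prod.ext hc1 hc2
  set S : Finset K := Finset.image φ Finset.univ with hS
  have hcard : S.card = Fintype.card F ^ 2 := by
    rw [hS, Finset.card_image_of_injective _ hφinj, Finset.card_univ, Fintype.card_prod, sq]
  have hvan' : ∀ y ∈ Fintype.piFinset (fun _ : Fin n => S), vanishesTo g y m := by
    intro y hy
    rw [Fintype.mem_piFinset] at hy
    have hex : ∀ k, ∃ p : F × F, φ p = y k := by
      intro k
      obtain ⟨p, _, hp⟩ := Finset.mem_image.mp (hy k)
      exact ⟨p, hp⟩
    choose p hp using hex
    have hy2 : y = ptUV (fun k => (p k).1) (fun k => (p k).2) := by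
      funext k
      rw [← hp k]
      rfl
    rw [hy2]
    exact hvan _ _
  have hSZ := SZaux.sz_mult n g hg0 S (fun _ => m) hvan'
  rw [Finset.sum_const, Fintype.card_piFinset_const, smul_eq_mul] at hSZ
  have hq2 : 0 < S.card := by
    rw [hcard]
    have := Fintype.card_pos (α := F)
    positivity
  have hstep : (m * S.card) * S.card ^ n ≤ d * S.card ^ n := by
    calc (m * S.card) * S.card ^ n = S.card ^ n * m * S.card := by ring
      _ ≤ g.totalDegree * S.card ^ n := hSZ
      _ ≤ d * S.card ^ n := Nat.mul_le_mul_right _ hgdeg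
  have hfin : m * S.card ≤ d := Nat.le_of_mul_le_mul_right hstep (pow_pos hq2 n)
  rw [hcard] at hfin
  omega
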